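/- Consider a communication graph with two process components P and Q, where P consists of n consecutive send vertices each matched to one of n consecutive receive vertices in Q (arc i goes from the i-th send of P to the i-th receive of Q), in order. Then zero tokens suffice to avoid deadlock (every maximal colouring sequence completes), but n tokens on Q are required for the graph to be block free under receive-side buffering. -/
import Mathlib


/-! Formal framework: communication graphs and the red/yellow/green colouring game
(Brodsky–Pedersen–Wagner, "On the Complexity of Buffer Allocation in Message Passing Systems"),
with receive-side token pools. -/

inductive Colour : Type
  | red | yellow | green
deriving DecidableEq

/-- A communication graph: vertices are partitioned into start/send/receive/end vertices,
`pred u v` means `u` is the component predecessor of `v` (a process arc `u → v`),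
`matched u v` is a communication arc from send `u` to its matching receive `v`,
`comp v` is the index of the process component of `v`, and `pos v` is the position
of `v` within its component chain. -/
structure CommGraph (V : Type) where
  isStart : V → Prop
  isSend : V → Prop
  isRecv : V → Prop
  isEnd : V → Prop
  pred : V → V → Prop
  matched : V → V → Prop
  comp : V → ℕ
  pos : V → ℕ

namespace CommGraph

variable {V : Type}

/-- An arc of the communication graph (process arc or communication arc). -/
def GArc (G : CommGraph V) (u v : V) : Prop := G.pred u v ∨ G.matched u v

/-- Well-formedness of a communication graph: the vertex kinds partition `V`,
components are chains (unique predecessors, positions increase along process arcs),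
communication arcs go from sends to receives in different components and form a
partial matching, and the graph is acyclic (arcs admit no infinite descent). -/
structure WF (G : CommGraph V) : Prop where
  kinds : ∀ v, G.isStart v ∨ G.isSend v ∨ G.isRecv v ∨ G.isEnd v
  start_not_send : ∀ v, G.isStart v → ¬ G.isSend v
  start_not_recv : ∀ v, G.isStart v → ¬ G.isRecv v
  start_not_end : ∀ v, G.isStart v → ¬ G.isEnd v
  send_not_recv : ∀ v, G.isSend v → ¬ G.isRecv v
  send_not_end : ∀ v, G.isSend v → ¬ G.isEnd v
  recv_not_end : ∀ v, G.isRecv v → ¬ G.isEnd v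
  pred_unique : ∀ {u u' v}, G.pred u v → G.pred u' v → u = u'
  pred_comp : ∀ {u v}, G.pred u v → G.comp u = G.comp v
  pred_pos : ∀ {u v}, G.pred u v → G.pos v = G.pos u + 1
  start_no_pred : ∀ {u v}, G.pred u v → ¬ G.isStart v
  has_pred : ∀ v, ¬ G.isStart v → ∃ u, G.pred u v
  matched_send : ∀ {u v}, G.matched u v → G.isSend u
  matched_recv : ∀ {u v}, G.matched u v → G.isRecv v
  matched_comp : ∀ {u v}, G.matched u v → G.comp u ≠ G.comp v
  matched_unique_left : ∀ {u u' v}, G.matched u v → G.matched u' v → u = u'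
  matched_unique_right : ∀ {u v v'}, G.matched u v → G.matched u v' → v = v'
  send_has_match : ∀ v, G.isSend v → ∃ w, G.matched v w
  recv_has_match : ∀ v, G.isRecv v → ∃ w, G.matched w v
  dag : WellFounded fun u v => G.GArc u v

end CommGraph

/-- A state of the colouring game: the colouring, which receive vertices currently
hold a token on their incident communication arc, and the number of available
tokens in each (per-process, receive-side) pool. -/
structure St (V : Type) where
  col : V → Colour
  tok : V → Bool
  pool : ℕ → ℕ

/-- The names of the colouring rules. -/
inductive Rule : Type
  | sendYel | recvYel | recvYelTok | sendGrn | recvGrn | endYel | endGrn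
deriving DecidableEq

variable {V : Type}

/-- One move of the colouring game (receive-side buffering: the token used by the
buffered-receive rule `recvYelTok` comes from the pool of the receiving component,
and is returned when the receive turns green). -/
inductive Step [DecidableEq V] (G : CommGraph V) : Rule → St V → St V → Prop
  | sendYel {s : St V} {v u : V} :
      G.isSend v → s.col v = .red → G.pred u v → s.col u = .green →
      Step G .sendYel s ⟨Function.update s.col v .yellow, s.tok, s.pool⟩
  | recvYel {s : St V} {v u w : V} :
      G.isRecv v → s.col v = .red → G.matched w v → s.col w = .yellow →
      G.pred u v → s.col u = .green →
      Step G .recvYel s ⟨Function.update s.col v .yellow, s.tok, s.pool⟩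
  | recvYelTok {s : St V} {v w : V} :
      G.isRecv v → s.col v = .red → G.matched w v → s.col w = .yellow →
      0 < s.pool (G.comp v) →
      Step G .recvYelTok s ⟨Function.update s.col v .yellow,
        Function.update s.tok v true,
        Function.update s.pool (G.comp v) (s.pool (G.comp v) - 1)⟩
  | sendGrn {s : St V} {v r : V} :
      G.isSend v → s.col v = .yellow → G.matched v r → s.col r = .yellow →
      Step G .sendGrn s ⟨Function.update s.col v .green, s.tok, s.pool⟩
  | recvGrn {s : St V} {v u w : V} :
      G.isRecv v → s.col v = .yellow → G.pred u v → s.col u = .green →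
      G.matched w v → s.col w = .green →
      Step G .recvGrn s ⟨Function.update s.col v .green,
        Function.update s.tok v false,
        if s.tok v then
          Function.update s.pool (G.comp v) (s.pool (G.comp v) + 1)
        else s.pool⟩
  | endYel {s : St V} {v u : V} :
      G.isEnd v → s.col v = .red → G.pred u v → s.col u = .green →
      Step G .endYel s ⟨Function.update s.col v .yellow, s.tok, s.pool⟩
  | endGrn {s : St V} {v : V} :
      G.isEnd v → s.col v = .yellow →
      Step G .endGrn s ⟨Function.update s.col v .green, s.tok, s.pool⟩

/-- `IsSeq G s l` : the list `l` of (rule, state) pairs is a valid colouring sequence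
starting from state `s`. -/
def IsSeq [DecidableEq V] (G : CommGraph V) : St V → List (Rule × St V) → Prop
  | _, [] => True
  | s, p :: l => Step G p.1 s p.2 ∧ IsSeq G p.2 l

/-- The list of states visited by a colouring sequence. -/
def states (s0 : St V) (l : List (Rule × St V)) : List (St V) :=
  s0 :: l.map Prod.snd

/-- The final state of a colouring sequence. -/
def finalSt (s0 : St V) (l : List (Rule × St V)) : St V :=
  (states s0 l).getLast (by simp [states])

open Classical in
/-- The initial state: start vertices green, all others red, no tokens placed,
token pools given by the token assignment `B` (pool of component `i` holds `B i`). -/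
noncomputable def init (G : CommGraph V) (B : ℕ → ℕ) : St V :=
  ⟨fun v => if G.isStart v then Colour.green else Colour.red, fun _ => false, B⟩

/-- A state from which no colouring rule applies. -/
def MaximalFrom [DecidableEq V] (G : CommGraph V) (s : St V) : Prop :=
  ∀ ρ t, ¬ Step G ρ s t

/-- A state is complete when every vertex is green. -/
def Completes (s : St V) : Prop := ∀ v, s.col v = Colour.green

/-- A deadlocking colouring sequence from `s0`: a maximal sequence whose final
colouring has a non-green vertex. -/
def Deadlocks [DecidableEq V] (G : CommGraph V) (s0 : St V) (l : List (Rule × St V)) : Prop :=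
  IsSeq G s0 l ∧ MaximalFrom G (finalSt s0 l) ∧ ¬ Completes (finalSt s0 l)

/-- The system is safe (deadlock free) under token assignment `B`:
every maximal colouring sequence completes. -/
def DeadlockFree [DecidableEq V] (G : CommGraph V) (B : ℕ → ℕ) : Prop :=
  ∀ l, IsSeq G (init G B) l → MaximalFrom G (finalSt (init G B) l) →
    Completes (finalSt (init G B) l)

/-- A state blocks: some yellow send has a matching red receive to which the
buffered-receive rule cannot be applied (no token available). -/
def Blocked (G : CommGraph V) (s : St V) : Prop :=
  ∃ v r, G.matched v r ∧ s.col v = Colour.yellow ∧ s.col r = Colour.red ∧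
    s.pool (G.comp r) = 0

/-- The graph is block free under token assignment `B`: no colouring sequence blocks. -/
def BlockFree [DecidableEq V] (G : CommGraph V) (B : ℕ → ℕ) : Prop :=
  ∀ l, IsSeq G (init G B) l → ¬ Blocked G (finalSt (init G B) l)


/-- The two-component pipeline: component `0` is `start → n sends → end`,
component `1` is `start → n receives → end`, with the `i`-th send matched to the
`i`-th receive. -/
def pipeGraph (n : ℕ) : CommGraph (Fin 2 × Fin (n + 2)) where
  isStart v := (v.2 : ℕ) = 0
  isEnd v := (v.2 : ℕ) = n + 1
  isSend v := (v.1 : ℕ) = 0 ∧ 0 < (v.2 : ℕ) ∧ (v.2 : ℕ) < n + 1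
  isRecv v := (v.1 : ℕ) = 1 ∧ 0 < (v.2 : ℕ) ∧ (v.2 : ℕ) < n + 1
  pred u v := u.1 = v.1 ∧ (v.2 : ℕ) = (u.2 : ℕ) + 1
  matched u v := (u.1 : ℕ) = 0 ∧ (v.1 : ℕ) = 1 ∧ u.2 = v.2 ∧
    0 < (u.2 : ℕ) ∧ (u.2 : ℕ) < n + 1
  comp v := v.1
  pos v := v.2

section PipeProof

open Colour

variable {V : Type} [DecidableEq V] {G : CommGraph V}

lemma finalSt_nil (s0 : St V) : finalSt s0 ([] : List (Rule × St V)) = s0 := rfl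

lemma finalSt_cons (s0 : St V) (p : Rule × St V) (l : List (Rule × St V)) :
    finalSt s0 (p :: l) = finalSt p.2 l := by
  cases l with
  | nil => rfl
  | cons q l => rfl

lemma isSeq_snoc {s0 : St V} {l : List (Rule × St V)} {ρ : Rule} {t : St V}
    (h : IsSeq G s0 l) (hs : Step G ρ (finalSt s0 l) t) :
    IsSeq G s0 (l ++ [(ρ, t)]) ∧ finalSt s0 (l ++ [(ρ, t)]) = t := by
  induction l generalizing s0 with
  | nil => exact ⟨⟨hs, trivial⟩, rfl⟩
  | cons p l ih =>
      obtain ⟨h1, h2⟩ := h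
      rw [finalSt_cons] at hs
      obtain ⟨ha, hb⟩ := ih h2 hs
      exact ⟨⟨h1, ha⟩, by rw [List.cons_append, finalSt_cons]; exact hb⟩

abbrev PV (n : ℕ) := Fin 2 × Fin (n + 2)

lemma PV.eq_iff {n : ℕ} {a b : PV n} : a = b ↔ (a.1 : ℕ) = b.1 ∧ (a.2 : ℕ) = b.2 := by
  simp [Prod.ext_iff, Fin.ext_iff]

lemma pred_ne {n : ℕ} {u v : PV n} (h : (pipeGraph n).pred u v) : u ≠ v := by
  intro e; subst e; have := h.2; omega

lemma matched_ne {n : ℕ} {u v : PV n} (h : (pipeGraph n).matched u v) : u ≠ v := by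
  intro e; subst e; have h1 := h.1; have h2 := h.2.1; omega

lemma pred_uniq {n : ℕ} {a u v : PV n} (h1 : (pipeGraph n).pred a v)
    (h2 : (pipeGraph n).pred u v) : a = u := by
  obtain ⟨h1a, h1b⟩ := h1; obtain ⟨h2a, h2b⟩ := h2
  refine PV.eq_iff.mpr ⟨by rw [h1a, h2a], by omega⟩

lemma matched_uniq_left {n : ℕ} {a u v : PV n} (h1 : (pipeGraph n).matched a v)
    (h2 : (pipeGraph n).matched u v) : a = u := by
  refine PV.eq_iff.mpr ⟨by rw [h1.1, h2.1], ?_⟩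
  rw [h1.2.2.1, h2.2.2.1]

lemma matched_uniq_right {n : ℕ} {u a b : PV n} (h1 : (pipeGraph n).matched u a)
    (h2 : (pipeGraph n).matched u b) : a = b := by
  refine PV.eq_iff.mpr ⟨by rw [h1.2.1, h2.2.1], ?_⟩
  rw [← h1.2.2.1, ← h2.2.2.1]

end PipeProof
section PipeInv

open Colour

/-- Invariant of states reachable from `init (pipeGraph n) 0`. -/
structure PInv (n : ℕ) (s : St (PV n)) : Prop where
  pool : ∀ i, s.pool i = 0
  tok : ∀ v, s.tok v = false
  start : ∀ v, (pipeGraph n).isStart v → s.col v = green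
  chain : ∀ u v, (pipeGraph n).pred u v → s.col v ≠ red → s.col u = green
  sg : ∀ u v, (pipeGraph n).matched u v → s.col u = green → s.col v ≠ red
  rg : ∀ u v, (pipeGraph n).matched u v → s.col v = green → s.col u = green

lemma pinv_step {n : ℕ} {ρ : Rule} {s t : St (PV n)} (hi : PInv n s)
    (h : Step (pipeGraph n) ρ s t) : PInv n t := by
  cases h with
  | @recvYelTok s v w hv hc hm hw hp =>
      rw [hi.pool] at hp; exact absurd hp (lt_irrefl 0)
  | @sendYel s v u hv hc hp hu =>
      refine ⟨hi.pool, hi.tok, ?_, ?_, ?_, ?_⟩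
      · intro w hw
        have hwv : w ≠ v := by
          intro e; subst e; have := hv.2.1; simp only [pipeGraph] at hw; omega
        simpa [Function.update_apply, hwv] using hi.start w hw
      · intro a b hab hb
        by_cases hbv : b = v
        · subst hbv
          obtain rfl : a = u := pred_uniq hab hp
          simp [Function.update_apply, (pred_ne hp), hu]
        · have hb' : s.col b ≠ red := by simpa [Function.update_apply, hbv] using hb
          have ha := hi.chain a b hab hb'
          by_cases hav : a = v
          · subst hav; rw [hc] at ha; exact Colour.noConfusion ha
          · simpa [Function.update_apply, hav] using ha
      · intro a b hm ha
        by_cases hav : a = v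
        · subst hav; simp [Function.update_apply] at ha
        · have ha' : s.col a = green := by simpa [Function.update_apply, hav] using ha
          have hb := hi.sg a b hm ha'
          by_cases hbv : b = v
          · subst hbv; simp [Function.update_apply]
          · simpa [Function.update_apply, hbv] using hb
      · intro a b hm hb
        by_cases hbv : b = v
        · subst hbv; simp [Function.update_apply] at hb
        · have hb' : s.col b = green := by simpa [Function.update_apply, hbv] using hb
          have ha := hi.rg a b hm hb'
          by_cases hav : a = v
          · subst hav; rw [hc] at ha; exact Colour.noConfusion ha
          · simpa [Function.update_apply, hav] using ha
  | @recvYel s v u w hv hc hm hw hp hu =>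
      refine ⟨hi.pool, hi.tok, ?_, ?_, ?_, ?_⟩
      · intro x hx
        have hxv : x ≠ v := by
          intro e; subst e; have := hv.2.1; simp only [pipeGraph] at hx; omega
        simpa [Function.update_apply, hxv] using hi.start x hx
      · intro a b hab hb
        by_cases hbv : b = v
        · subst hbv
          obtain rfl : a = u := pred_uniq hab hp
          simp [Function.update_apply, (pred_ne hp), hu]
        · have hb' : s.col b ≠ red := by simpa [Function.update_apply, hbv] using hb
          have ha := hi.chain a b hab hb'
          by_cases hav : a = v
          · subst hav; rw [hc] at ha; exact Colour.noConfusion ha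
          · simpa [Function.update_apply, hav] using ha
      · intro a b hm' ha
        by_cases hav : a = v
        · subst hav; simp [Function.update_apply] at ha
        · have ha' : s.col a = green := by simpa [Function.update_apply, hav] using ha
          have hb := hi.sg a b hm' ha'
          by_cases hbv : b = v
          · subst hbv; simp [Function.update_apply]
          · simpa [Function.update_apply, hbv] using hb
      · intro a b hm' hb
        by_cases hbv : b = v
        · subst hbv; simp [Function.update_apply] at hb
        · have hb' : s.col b = green := by simpa [Function.update_apply, hbv] using hb
          have ha := hi.rg a b hm' hb'
          by_cases hav : a = v
          · subst hav; rw [hc] at ha; exact Colour.noConfusion ha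
          · simpa [Function.update_apply, hav] using ha
  | @sendGrn s v r hv hc hm hr =>
      refine ⟨hi.pool, hi.tok, ?_, ?_, ?_, ?_⟩
      · intro x hx
        have hxv : x ≠ v := by
          intro e; subst e; have := hv.2.1; simp only [pipeGraph] at hx; omega
        simpa [Function.update_apply, hxv] using hi.start x hx
      · intro a b hab hb
        by_cases hbv : b = v
        · have hb0 : s.col b ≠ red := by rw [hbv, hc]; exact fun e => Colour.noConfusion e
          have ha := hi.chain a b hab hb0
          have hav : a ≠ v := hbv ▸ pred_ne hab
          simpa [Function.update_apply, hav] using ha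
        · have hb' : s.col b ≠ red := by simpa [Function.update_apply, hbv] using hb
          have ha := hi.chain a b hab hb'
          by_cases hav : a = v
          · subst hav; rw [hc] at ha; exact Colour.noConfusion ha
          · simpa [Function.update_apply, hav] using ha
      · intro a b hm' ha
        by_cases hav : a = v
        · have hbr : b = r := matched_uniq_right (hav ▸ hm' : (pipeGraph n).matched v b) hm
          have hbv : b ≠ v := hav ▸ Ne.symm (matched_ne hm')
          simp [Function.update_apply, hbv, hbr, hr, Ne.symm (matched_ne hm)]
        · have ha' : s.col a = green := by simpa [Function.update_apply, hav] using ha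
          have hb := hi.sg a b hm' ha'
          by_cases hbv : b = v
          · subst hbv; simp [Function.update_apply]
          · simpa [Function.update_apply, hbv] using hb
      · intro a b hm' hb
        by_cases hbv : b = v
        · subst hbv
          have h1 := hm'.2.1; have h2 := hv.1; omega
        · have hb' : s.col b = green := by simpa [Function.update_apply, hbv] using hb
          have ha := hi.rg a b hm' hb'
          by_cases hav : a = v
          · subst hav; rw [hc] at ha; exact Colour.noConfusion ha
          · simpa [Function.update_apply, hav] using ha
  | @recvGrn s v u w hv hc hp hu hm hw =>
      refine ⟨?_, ?_, ?_, ?_, ?_, ?_⟩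
      · intro i; simp [hi.tok v, hi.pool i]
      · intro x; simp [Function.update_apply, hi.tok]
      · intro x hx
        have hxv : x ≠ v := by
          intro e; subst e; have := hv.2.1; simp only [pipeGraph] at hx; omega
        simpa [Function.update_apply, hxv] using hi.start x hx
      · intro a b hab hb
        by_cases hbv : b = v
        · subst hbv
          obtain rfl : a = u := pred_uniq hab hp
          simp [Function.update_apply, (pred_ne hp), hu]
        · have hb' : s.col b ≠ red := by simpa [Function.update_apply, hbv] using hb
          have ha := hi.chain a b hab hb'
          by_cases hav : a = v
          · subst hav; rw [hc] at ha; exact Colour.noConfusion ha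
          · simpa [Function.update_apply, hav] using ha
      · intro a b hm' ha
        by_cases hav : a = v
        · subst hav
          have h1 := hm'.1; have h2 := hv.1; omega
        · have ha' : s.col a = green := by simpa [Function.update_apply, hav] using ha
          have hb := hi.sg a b hm' ha'
          by_cases hbv : b = v
          · subst hbv; simp [Function.update_apply]
          · simpa [Function.update_apply, hbv] using hb
      · intro a b hm' hb
        by_cases hbv : b = v
        · have haw : a = w := matched_uniq_left (hbv ▸ hm') hm
          have hav : a ≠ v := by rw [haw]; exact matched_ne hm
          simp [Function.update_apply, hav, haw, hw]
        · have hb' : s.col b = green := by simpa [Function.update_apply, hbv] using hb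
          have ha := hi.rg a b hm' hb'
          by_cases hav : a = v
          · subst hav; rw [hc] at ha; exact Colour.noConfusion ha
          · simpa [Function.update_apply, hav] using ha
  | @endYel s v u hv hc hp hu =>
      refine ⟨hi.pool, hi.tok, ?_, ?_, ?_, ?_⟩
      · intro x hx
        have hxv : x ≠ v := by
          intro e; subst e; simp only [pipeGraph] at hx hv; omega
        simpa [Function.update_apply, hxv] using hi.start x hx
      · intro a b hab hb
        by_cases hbv : b = v
        · subst hbv
          obtain rfl : a = u := pred_uniq hab hp
          simp [Function.update_apply, (pred_ne hp), hu]
        · have hb' : s.col b ≠ red := by simpa [Function.update_apply, hbv] using hb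
          have ha := hi.chain a b hab hb'
          by_cases hav : a = v
          · subst hav; rw [hc] at ha; exact Colour.noConfusion ha
          · simpa [Function.update_apply, hav] using ha
      · intro a b hm' ha
        by_cases hav : a = v
        · subst hav
          have h1 := hm'.2.2.2.2; simp only [pipeGraph] at hv; omega
        · have ha' : s.col a = green := by simpa [Function.update_apply, hav] using ha
          have hb := hi.sg a b hm' ha'
          by_cases hbv : b = v
          · subst hbv; simp [Function.update_apply]
          · simpa [Function.update_apply, hbv] using hb
      · intro a b hm' hb
        by_cases hbv : b = v
        · subst hbv; simp [Function.update_apply] at hb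
        · have hb' : s.col b = green := by simpa [Function.update_apply, hbv] using hb
          have ha := hi.rg a b hm' hb'
          by_cases hav : a = v
          · subst hav; rw [hc] at ha; exact Colour.noConfusion ha
          · simpa [Function.update_apply, hav] using ha
  | @endGrn s v hv hc =>
      refine ⟨hi.pool, hi.tok, ?_, ?_, ?_, ?_⟩
      · intro x hx
        have hxv : x ≠ v := by
          intro e; subst e; simp only [pipeGraph] at hx hv; omega
        simpa [Function.update_apply, hxv] using hi.start x hx
      · intro a b hab hb
        by_cases hbv : b = v
        · have hb0 : s.col b ≠ red := by rw [hbv, hc]; exact fun e => Colour.noConfusion e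
          have ha := hi.chain a b hab hb0
          have hav : a ≠ v := hbv ▸ pred_ne hab
          simpa [Function.update_apply, hav] using ha
        · have hb' : s.col b ≠ red := by simpa [Function.update_apply, hbv] using hb
          have ha := hi.chain a b hab hb'
          by_cases hav : a = v
          · subst hav; rw [hc] at ha; exact Colour.noConfusion ha
          · simpa [Function.update_apply, hav] using ha
      · intro a b hm' ha
        by_cases hav : a = v
        · subst hav
          have h1 := hm'.2.2.2.2; simp only [pipeGraph] at hv; omega
        · have ha' : s.col a = green := by simpa [Function.update_apply, hav] using ha
          have hb := hi.sg a b hm' ha'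
          by_cases hbv : b = v
          · subst hbv; simp [Function.update_apply]
          · simpa [Function.update_apply, hbv] using hb
      · intro a b hm' hb
        by_cases hbv : b = v
        · subst hbv
          have h1 := hm'.2.2.2.2
          have h2 : (b.2 : ℕ) = n + 1 := hv
          have h3 := hm'.2.2.1
          have : (a.2 : ℕ) = (b.2 : ℕ) := by rw [h3]
          omega
        · have hb' : s.col b = green := by simpa [Function.update_apply, hbv] using hb
          have ha := hi.rg a b hm' hb'
          by_cases hav : a = v
          · subst hav; rw [hc] at ha; exact Colour.noConfusion ha
          · simpa [Function.update_apply, hav] using ha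

end PipeInv
section PipePart1

open Colour

lemma pinv_init (n : ℕ) : PInv n (init (pipeGraph n) (fun _ => 0)) := by
  refine ⟨fun _ => rfl, fun _ => rfl, ?_, ?_, ?_, ?_⟩
  · intro v hv; simp only [init]; rw [if_pos hv]
  · intro u v huv hv
    exfalso; apply hv
    simp only [init]
    rw [if_neg]
    have := huv.2; simp only [pipeGraph]; omega
  · intro u v hm hu
    exfalso
    have h1 := hm.2.2.2.1
    have h2 : ¬ (pipeGraph n).isStart u := by simp only [pipeGraph]; omega
    simp only [init] at hu; rw [if_neg h2] at hu; exact Colour.noConfusion hu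
  · intro u v hm hv
    exfalso
    have h1 := hm.2.2.2.1
    have h3 : (v.2 : ℕ) = (u.2 : ℕ) := by rw [hm.2.2.1]
    have h2 : ¬ (pipeGraph n).isStart v := by simp only [pipeGraph]; omega
    simp only [init] at hv; rw [if_neg h2] at hv; exact Colour.noConfusion hv

lemma pinv_seq {n : ℕ} {s0 : St (PV n)} {l : List (Rule × St (PV n))}
    (hi : PInv n s0) (h : IsSeq (pipeGraph n) s0 l) : PInv n (finalSt s0 l) := by
  induction l generalizing s0 with
  | nil => exact hi
  | cons p l ih =>
      obtain ⟨h1, h2⟩ := h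
      rw [finalSt_cons]
      exact ih (pinv_step hi h1) h2

lemma pinv_maximal_green {n : ℕ} {s : St (PV n)} (hi : PInv n s)
    (hm : MaximalFrom (pipeGraph n) s) : Completes s := by
  have key : ∀ j : ℕ, ∀ h : j < n + 2,
      s.col (0, ⟨j, h⟩) = green ∧ s.col (1, ⟨j, h⟩) = green := by
    intro j
    induction j using Nat.strong_induction_on with
    | _ j ih =>
      intro h
      match j, h with
      | 0, h =>
        constructor <;> exact hi.start _ (by simp [pipeGraph])
      | (k+1), h =>
        have hk : k < n + 2 := by omega
        obtain ⟨h0, h1⟩ := ih k (by omega) hk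
        have hpred0 : (pipeGraph n).pred (0, ⟨k, hk⟩) ((0 : Fin 2), (⟨k+1, h⟩ : Fin (n+2))) := by
          exact ⟨rfl, by simp⟩
        have hpred1 : (pipeGraph n).pred (1, ⟨k, hk⟩) ((1 : Fin 2), (⟨k+1, h⟩ : Fin (n+2))) := by
          exact ⟨rfl, by simp⟩
        have hmatch : (pipeGraph n).matched ((0:Fin 2), (⟨k+1, h⟩ : Fin (n+2)))
            ((1:Fin 2), (⟨k+1, h⟩ : Fin (n+2))) ∨ k + 1 = n + 1 := by
          by_cases he : k + 1 = n + 1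
          · exact Or.inr he
          · exact Or.inl ⟨rfl, rfl, rfl, by simp, by simp; omega⟩
        -- a := col (0, k+1), b := col (1, k+1)
        have ha : s.col (0, ⟨k+1, h⟩) ≠ red := by
          intro hr
          rcases hmatch with hmt | he
          · exact hm _ _ (Step.sendYel ⟨rfl, by simp, by simpa using hmt.2.2.2.2⟩ hr hpred0 h0)
          · exact hm _ _ (Step.endYel (by simpa [pipeGraph] using he) hr hpred0 h0)
        have hb : s.col (1, ⟨k+1, h⟩) ≠ red := by
          intro hr
          rcases hmatch with hmt | he
          · -- receive vertex
            rcases hc : s.col (0, ⟨k+1, h⟩) with _ | _ | _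
            · exact ha hc
            · exact hm _ _ (Step.recvYel (by exact ⟨rfl, by simp, by
                have := hmt.2.2.2.2; simpa using this⟩) hr hmt hc hpred1 h1)
            · exact hi.sg _ _ hmt hc hr
          · exact hm _ _ (Step.endYel (by simpa [pipeGraph] using he) hr hpred1 h1)
        have hag : s.col (0, ⟨k+1, h⟩) = green := by
          rcases hc : s.col (0, ⟨k+1, h⟩) with _ | _ | _
          · exact absurd hc ha
          · exfalso
            rcases hmatch with hmt | he
            · rcases hcb : s.col (1, ⟨k+1, h⟩) with _ | _ | _
              · exact hb hcb
              · exact hm _ _ (Step.sendGrn ⟨rfl, by simp, by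
                  have := hmt.2.2.2.2; simpa using this⟩ hc hmt hcb)
              · have := hi.rg _ _ hmt hcb; rw [hc] at this; exact Colour.noConfusion this
            · exact hm _ _ (Step.endGrn (by simpa [pipeGraph] using he) hc)
          · rfl
        have hbg : s.col (1, ⟨k+1, h⟩) = green := by
          rcases hc : s.col (1, ⟨k+1, h⟩) with _ | _ | _
          · exact absurd hc hb
          · exfalso
            rcases hmatch with hmt | he
            · exact hm _ _ (Step.recvGrn (by exact ⟨rfl, by simp, by
                have := hmt.2.2.2.2; simpa using this⟩) hc hpred1 h1 hmt hag)
            · exact hm _ _ (Step.endGrn (by simpa [pipeGraph] using he) hc)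
          · rfl
        exact ⟨hag, hbg⟩
  intro v
  obtain ⟨c, j⟩ := v
  have hj := key (j : ℕ) j.isLt
  rw [Fin.eta] at hj
  fin_cases c
  · exact hj.1
  · exact hj.2

lemma pipe_deadlockFree (n : ℕ) : DeadlockFree (pipeGraph n) (fun _ => 0) := by
  intro l hseq hmax
  exact pinv_maximal_green (pinv_seq (pinv_init n) hseq) hmax

end PipePart1
section PipePart2

open Colour

/-- State after `i` rounds of the blocking schedule. -/
def PSt (n : ℕ) (B : ℕ → ℕ) (i : ℕ) (s : St (PV n)) : Prop :=
  (∀ j : Fin (n + 2),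
    ((j : ℕ) ≤ i → s.col (0, j) = green) ∧
    (i < (j : ℕ) → s.col (0, j) = red) ∧
    ((j : ℕ) = 0 → s.col (1, j) = green) ∧
    (0 < (j : ℕ) → (j : ℕ) ≤ i → s.col (1, j) = yellow) ∧
    (i < (j : ℕ) → s.col (1, j) = red)) ∧
  s.pool 1 = B 1 - i

lemma buildSeq (n : ℕ) (B : ℕ → ℕ) :
    ∀ i, i ≤ B 1 → i ≤ n → ∃ l, IsSeq (pipeGraph n) (init (pipeGraph n) B) l ∧
      PSt n B i (finalSt (init (pipeGraph n) B) l) := by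
  intro i
  induction i with
  | zero =>
      intro _ _
      refine ⟨[], trivial, ?_, by rw [finalSt_nil]; simp [init]⟩
      intro j
      rw [finalSt_nil]
      refine ⟨?_, ?_, ?_, ?_, ?_⟩
      · intro hj
        simp only [init]; rw [if_pos]; show ((j : ℕ)) = 0; omega
      · intro hj
        simp only [init]; rw [if_neg]; show ¬ ((j : ℕ)) = 0; omega
      · intro hj
        simp only [init]; rw [if_pos]; exact hj
      · intro hj1 hj2; omega
      · intro hj
        simp only [init]; rw [if_neg]; show ¬ ((j : ℕ)) = 0; omega
  | succ i ih =>
      intro h1 h2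
      obtain ⟨l, hseq, hP⟩ := ih (by omega) (by omega)
      obtain ⟨hcol, hpool⟩ := hP
      set s := finalSt (init (pipeGraph n) B) l with hs
      have hin2 : i + 1 < n + 2 := by omega
      set jv : Fin (n + 2) := ⟨i + 1, hin2⟩ with hjv
      set ju : Fin (n + 2) := ⟨i, by omega⟩ with hju
      have hsend : (pipeGraph n).isSend ((0 : Fin 2), jv) := ⟨rfl, by simp [hjv], by simp [hjv]; omega⟩
      have hrecv : (pipeGraph n).isRecv ((1 : Fin 2), jv) := ⟨rfl, by simp [hjv], by simp [hjv]; omega⟩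
      have hmt : (pipeGraph n).matched ((0 : Fin 2), jv) ((1 : Fin 2), jv) :=
        ⟨rfl, rfl, rfl, by simp [hjv], by simp [hjv]; omega⟩
      have hpred : (pipeGraph n).pred ((0 : Fin 2), ju) ((0 : Fin 2), jv) := ⟨rfl, by simp [hjv, hju]⟩
      have hne01 : ∀ a b : Fin (n+2), ((0 : Fin 2), a) ≠ ((1 : Fin 2), b) := by
        intro a b; simp [PV.eq_iff]
      have hnejj : ((0 : Fin 2), ju) ≠ ((0 : Fin 2), jv) := by
        simp [PV.eq_iff, hjv, hju]
      -- step 1 : sendYel at (0, jv)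
      have hst1 : Step (pipeGraph n) .sendYel s
          ⟨Function.update s.col (0, jv) .yellow, s.tok, s.pool⟩ :=
        Step.sendYel hsend ((hcol jv).2.1 (by simp [hjv])) hpred ((hcol ju).1 (by simp [hju]))
      obtain ⟨hseq1, hfin1⟩ := isSeq_snoc hseq hst1
      set s1 : St (PV n) := ⟨Function.update s.col (0, jv) .yellow, s.tok, s.pool⟩ with hs1
      -- step 2 : recvYelTok at (1, jv)
      have hc1 : s1.col (1, jv) = red := by
        show Function.update s.col (0, jv) .yellow (1, jv) = red
        rw [Function.update_of_ne (hne01 jv jv).symm]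
        exact (hcol jv).2.2.2.2 (by simp [hjv])
      have hw1 : s1.col (0, jv) = yellow := by
        show Function.update s.col (0, jv) .yellow (0, jv) = yellow
        simp
      have hp1 : 0 < s1.pool ((pipeGraph n).comp ((1 : Fin 2), jv)) := by
        show 0 < s.pool 1
        rw [hpool]; omega
      have hst2 : Step (pipeGraph n) .recvYelTok s1
          ⟨Function.update s1.col (1, jv) .yellow,
            Function.update s1.tok (1, jv) true,
            Function.update s1.pool ((pipeGraph n).comp ((1 : Fin 2), jv))
              (s1.pool ((pipeGraph n).comp ((1 : Fin 2), jv)) - 1)⟩ :=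
        Step.recvYelTok hrecv hc1 hmt hw1 hp1
      obtain ⟨hseq2, hfin2⟩ := isSeq_snoc hseq1 (by rw [hfin1]; exact hst2)
      set s2 : St (PV n) := ⟨Function.update s1.col (1, jv) .yellow,
            Function.update s1.tok (1, jv) true,
            Function.update s1.pool ((pipeGraph n).comp ((1 : Fin 2), jv))
              (s1.pool ((pipeGraph n).comp ((1 : Fin 2), jv)) - 1)⟩ with hs2
      -- step 3 : sendGrn at (0, jv)
      have hc2 : s2.col (0, jv) = yellow := by
        show Function.update s1.col (1, jv) .yellow (0, jv) = yellow
        rw [Function.update_of_ne (hne01 jv jv)]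
        exact hw1
      have hr2 : s2.col (1, jv) = yellow := by
        show Function.update s1.col (1, jv) .yellow (1, jv) = yellow
        simp
      have hst3 : Step (pipeGraph n) .sendGrn s2
          ⟨Function.update s2.col (0, jv) .green, s2.tok, s2.pool⟩ :=
        Step.sendGrn hsend hc2 hmt hr2
      obtain ⟨hseq3, hfin3⟩ := isSeq_snoc hseq2 (by rw [hfin2]; exact hst3)
      refine ⟨_, hseq3, ?_⟩
      rw [hfin3]
      have e0 : ∀ j : Fin (n + 2),
          (Function.update s2.col (0, jv) Colour.green) (0, j)
            = if (j : ℕ) = i + 1 then green else s.col (0, j) := by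
        intro j
        by_cases hj : (j : ℕ) = i + 1
        · have : j = jv := by rw [hjv]; exact Fin.ext hj
          subst this
          simp [hj]
        · have hjne : ((0 : Fin 2), j) ≠ ((0 : Fin 2), jv) := by
            intro e
            exact hj (congrArg Fin.val (congrArg Prod.snd e))
          rw [if_neg hj, Function.update_of_ne hjne]
          show Function.update s1.col (1, jv) .yellow (0, j) = s.col (0, j)
          rw [Function.update_of_ne (hne01 j jv)]
          show Function.update s.col (0, jv) .yellow (0, j) = s.col (0, j)
          rw [Function.update_of_ne hjne]
      have e1 : ∀ j : Fin (n + 2),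
          (Function.update s2.col (0, jv) Colour.green) (1, j)
            = if (j : ℕ) = i + 1 then yellow else s.col (1, j) := by
        intro j
        rw [Function.update_of_ne (hne01 jv j).symm]
        show Function.update s1.col (1, jv) .yellow (1, j) = _
        by_cases hj : (j : ℕ) = i + 1
        · have : j = jv := by rw [hjv]; exact Fin.ext hj
          subst this
          simp [hj]
        · have hjne : ((1 : Fin 2), j) ≠ ((1 : Fin 2), jv) := by
            intro e
            exact hj (congrArg Fin.val (congrArg Prod.snd e))
          rw [if_neg hj, Function.update_of_ne hjne]
          show Function.update s.col (0, jv) .yellow (1, j) = s.col (1, j)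
          rw [Function.update_of_ne (hne01 jv j).symm]
      constructor
      · intro j
        refine ⟨?_, ?_, ?_, ?_, ?_⟩
        · intro hj
          show (Function.update s2.col (0, jv) Colour.green) (0, j) = green
          rw [e0]
          by_cases hj' : (j : ℕ) = i + 1
          · rw [if_pos hj']
          · rw [if_neg hj']; exact (hcol j).1 (by omega)
        · intro hj
          show (Function.update s2.col (0, jv) Colour.green) (0, j) = red
          rw [e0, if_neg (by omega)]
          exact (hcol j).2.1 (by omega)
        · intro hj
          show (Function.update s2.col (0, jv) Colour.green) (1, j) = green
          rw [e1, if_neg (by omega)]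
          exact (hcol j).2.2.1 hj
        · intro hj1 hj2
          show (Function.update s2.col (0, jv) Colour.green) (1, j) = yellow
          rw [e1]
          by_cases hj' : (j : ℕ) = i + 1
          · rw [if_pos hj']
          · rw [if_neg hj']; exact (hcol j).2.2.2.1 hj1 (by omega)
        · intro hj
          show (Function.update s2.col (0, jv) Colour.green) (1, j) = red
          rw [e1, if_neg (by omega)]
          exact (hcol j).2.2.2.2 (by omega)
      · show (Function.update s1.pool ((pipeGraph n).comp ((1 : Fin 2), jv))
              (s1.pool ((pipeGraph n).comp ((1 : Fin 2), jv)) - 1)) 1 = B 1 - (i + 1)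
        have hcomp : (pipeGraph n).comp ((1 : Fin 2), jv) = 1 := rfl
        rw [hcomp, Function.update_self]
        show s.pool 1 - 1 = B 1 - (i + 1)
        rw [hpool]; omega

lemma pipe_needs_buffers (n : ℕ) (B : ℕ → ℕ) (hbf : BlockFree (pipeGraph n) B) :
    n ≤ B 1 := by
  by_contra hlt
  push_neg at hlt
  obtain ⟨l, hseq, hcol, hpool⟩ := buildSeq n B (B 1) le_rfl (le_of_lt hlt)
  set s := finalSt (init (pipeGraph n) B) l with hs
  set m := B 1 with hm
  have hin2 : m + 1 < n + 2 := by omega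
  set jv : Fin (n + 2) := ⟨m + 1, hin2⟩ with hjv
  set ju : Fin (n + 2) := ⟨m, by omega⟩ with hju
  have hsend : (pipeGraph n).isSend ((0 : Fin 2), jv) := ⟨rfl, by simp [hjv], by simp [hjv]; omega⟩
  have hmt : (pipeGraph n).matched ((0 : Fin 2), jv) ((1 : Fin 2), jv) :=
    ⟨rfl, rfl, rfl, by simp [hjv], by simp [hjv]; omega⟩
  have hpred : (pipeGraph n).pred ((0 : Fin 2), ju) ((0 : Fin 2), jv) := ⟨rfl, by simp [hjv, hju]⟩
  have hst : Step (pipeGraph n) .sendYel s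
      ⟨Function.update s.col (0, jv) .yellow, s.tok, s.pool⟩ :=
    Step.sendYel hsend ((hcol jv).2.1 (by simp [hjv])) hpred ((hcol ju).1 (by simp [hju]))
  obtain ⟨hseq', hfin'⟩ := isSeq_snoc hseq hst
  apply hbf _ hseq'
  rw [hfin']
  refine ⟨((0 : Fin 2), jv), ((1 : Fin 2), jv), hmt, ?_, ?_, ?_⟩
  · show Function.update s.col (0, jv) .yellow (0, jv) = yellow
    simp
  · show Function.update s.col (0, jv) .yellow (1, jv) = red
    rw [Function.update_of_ne (by simp [PV.eq_iff])]
    exact (hcol jv).2.2.2.2 (by simp [hjv])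
  · show s.pool 1 = 0
    rw [hpool]; omega

end PipePart2

/-- **Example separating deadlock freedom from block freedom.** For the pipeline of
`n` messages from component `0` to component `1`: zero tokens suffice to avoid
deadlock (every maximal colouring sequence completes), but any receive-side
block-free token assignment must put at least `n` tokens on the receiving
component `1`. -/
theorem pipe_deadlockfree_but_needs_n_buffers (n : ℕ) :
    DeadlockFree (pipeGraph n) (fun _ => 0) ∧
      ∀ B : ℕ → ℕ, BlockFree (pipeGraph n) B → n ≤ B 1 :=
  ⟨pipe_deadlockFree n, fun B hbf => pipe_needs_buffers n B hbf⟩
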